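/- For any x in the bisubmodular polyhedron P₊(f), the tight family F(x) = {(X,Y) ∈ 3^N : x(X)−x(Y) = f(X,Y)} is closed under reduced union ⊔ and reduced intersection ⊓. -/

import Mathlib

open Finset

lemma sum_sdiff_sub {n : ℕ} (x : Fin n → ℝ) (A B : Finset (Fin n)) :
    ∑ i ∈ A \ B, x i = ∑ i ∈ A, x i - ∑ i ∈ A ∩ B, x i := by
  rw [← Finset.sdiff_inter_self_left A B,
    Finset.sum_sdiff_eq_sub (Finset.inter_subset_left)]

/-- The tight family `F(x)` of a point of the bisubmodular polyhedron is closed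
under reduced union `⊔` and intersection `⊓`. -/
theorem tight_family_closed {n : ℕ} (f : Finset (Fin n) → Finset (Fin n) → ℝ)
    (hbi : ∀ X₁ Y₁ X₂ Y₂ : Finset (Fin n), Disjoint X₁ Y₁ → Disjoint X₂ Y₂ →
      f ((X₁ ∪ X₂) \ (Y₁ ∪ Y₂)) ((Y₁ ∪ Y₂) \ (X₁ ∪ X₂)) + f (X₁ ∩ X₂) (Y₁ ∩ Y₂)
        ≤ f X₁ Y₁ + f X₂ Y₂)
    (hf0 : f ∅ ∅ = 0)
    (x : Fin n → ℝ)
    (hx : ∀ X Y : Finset (Fin n), Disjoint X Y →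
      ∑ i ∈ X, x i - ∑ i ∈ Y, x i ≤ f X Y)
    (X₁ Y₁ X₂ Y₂ : Finset (Fin n)) (h₁ : Disjoint X₁ Y₁) (h₂ : Disjoint X₂ Y₂)
    (t₁ : ∑ i ∈ X₁, x i - ∑ i ∈ Y₁, x i = f X₁ Y₁)
    (t₂ : ∑ i ∈ X₂, x i - ∑ i ∈ Y₂, x i = f X₂ Y₂) :
    (∑ i ∈ (X₁ ∪ X₂) \ (Y₁ ∪ Y₂), x i - ∑ i ∈ (Y₁ ∪ Y₂) \ (X₁ ∪ X₂), x i
        = f ((X₁ ∪ X₂) \ (Y₁ ∪ Y₂)) ((Y₁ ∪ Y₂) \ (X₁ ∪ X₂)))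
    ∧ (∑ i ∈ X₁ ∩ X₂, x i - ∑ i ∈ Y₁ ∩ Y₂, x i = f (X₁ ∩ X₂) (Y₁ ∩ Y₂)) := by
  set A := X₁ ∪ X₂
  set B := Y₁ ∪ Y₂
  -- x-sum identity
  have key : (∑ i ∈ A \ B, x i - ∑ i ∈ B \ A, x i)
      + (∑ i ∈ X₁ ∩ X₂, x i - ∑ i ∈ Y₁ ∩ Y₂, x i)
      = (∑ i ∈ X₁, x i - ∑ i ∈ Y₁, x i) + (∑ i ∈ X₂, x i - ∑ i ∈ Y₂, x i) := by
    have h1 := sum_sdiff_sub x A B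
    have h2 := sum_sdiff_sub x B A
    have h3 : ∑ i ∈ A, x i + ∑ i ∈ X₁ ∩ X₂, x i
        = ∑ i ∈ X₁, x i + ∑ i ∈ X₂, x i := by
      have := Finset.sum_union_inter (s₁ := X₁) (s₂ := X₂) (f := x)
      linarith
    have h4 : ∑ i ∈ B, x i + ∑ i ∈ Y₁ ∩ Y₂, x i
        = ∑ i ∈ Y₁, x i + ∑ i ∈ Y₂, x i := by
      have := Finset.sum_union_inter (s₁ := Y₁) (s₂ := Y₂) (f := x)
      linarith
    have h5 : A ∩ B = B ∩ A := Finset.inter_comm A B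
    rw [h5] at h1
    linarith
  have d1 : Disjoint (A \ B) (B \ A) := disjoint_sdiff_sdiff
  have d2 : Disjoint (X₁ ∩ X₂) (Y₁ ∩ Y₂) :=
    h₁.mono Finset.inter_subset_left Finset.inter_subset_left
  have u1 := hx _ _ d1
  have u2 := hx _ _ d2
  have hb := hbi X₁ Y₁ X₂ Y₂ h₁ h₂
  constructor <;> linarith
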